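/- Let D_n be the dihedral group of order 2n, a coprime to n, b ∈ Z/nZ, and φ_{a,b} the automorphism with φ_{a,b}(τ^ε σ^i) = τ^ε σ^{ai+εb}. Let d = gcd(n, 1−a, b). Then the subgroup of D_n generated by {x·φ_{a,b}(x)⁻¹ : x ∈ D_n} equals the cyclic subgroup ⟨σ^d⟩. -/

import Mathlib

open DihedralGroup

lemma aux_r_inv {n : ℕ} (i : ZMod n) : (r i : DihedralGroup n)⁻¹ = r (-i) :=
  inv_eq_of_mul_eq_one_right (by rw [r_mul_r, add_neg_cancel, one_def])

lemma aux_sr_inv {n : ℕ} (i : ZMod n) : (sr i : DihedralGroup n)⁻¹ = sr i :=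
  inv_eq_of_mul_eq_one_right (sr_mul_self i)

lemma aux_r_pow {n : ℕ} (i : ZMod n) (k : ℕ) :
    (r i : DihedralGroup n) ^ k = r ((k : ZMod n) * i) := by
  induction k with
  | zero => simp [one_def, -r_zero]
  | succ k ih => rw [pow_succ, ih, r_mul_r]; congr 1; push_cast; ring

lemma aux_r_zpow {n : ℕ} (i : ZMod n) (k : ℤ) :
    (r i : DihedralGroup n) ^ k = r ((k : ZMod n) * i) := by
  cases k with
  | ofNat k => rw [Int.ofNat_eq_coe, zpow_natCast, aux_r_pow]; norm_cast
  | negSucc k =>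
      rw [zpow_negSucc, aux_r_pow, aux_r_inv]
      congr 1
      push_cast [Int.negSucc_eq]
      ring

lemma aux_mem_zpowers {n : ℕ} [NeZero n] (d x : ZMod n) :
    (r (d * x) : DihedralGroup n) ∈ Subgroup.zpowers (r d) :=
  ⟨(x.val : ℤ), by
    show r d ^ ((x.val : ℤ)) = _
    rw [aux_r_zpow]
    congr 1
    push_cast [ZMod.natCast_val, ZMod.cast_id]
    ring⟩

/-- For the automorphism `φ_{a,b}` of `D_n` (`φ_{a,b}(τ^ε σ^i) = τ^ε σ^{a i + ε b}`), the
subgroup generated by `{x * φ_{a,b}(x)⁻¹ : x ∈ D_n}` is the cyclic subgroup `⟨σ^d⟩`,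
where `d = gcd(n, 1−a, b)`. -/
theorem dihedral_orbit_subgroup_eq_zpowers {n : ℕ} [NeZero n]
    (a b : ZMod n) (ha : IsUnit a)
    (φ : DihedralGroup n ≃* DihedralGroup n)
    (hφr : ∀ i : ZMod n, φ (r i) = r (a * i))
    (hφs : ∀ i : ZMod n, φ (sr i) = sr (a * i + b)) :
    Subgroup.closure {g : DihedralGroup n | ∃ x : DihedralGroup n, g = x * (φ x)⁻¹} =
      Subgroup.zpowers (r ((Nat.gcd (Nat.gcd n (1 - a).val) b.val : ℕ) : ZMod n)) := by
  set m : ℕ := Nat.gcd n (1 - a).val with hm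
  set d : ℕ := Nat.gcd m b.val with hd
  have hd1 : ((d : ZMod n)) ∣ (1 - a) := by
    have h : d ∣ (1 - a).val := (Nat.gcd_dvd_left m b.val).trans
      (Nat.gcd_dvd_right n (1 - a).val) |>.trans dvd_rfl
    calc (d : ZMod n) ∣ (((1 - a).val : ℕ) : ZMod n) := Nat.cast_dvd_cast h
      _ = 1 - a := ZMod.natCast_val _ |>.trans (ZMod.cast_id _ _)
  have hdb : ((d : ZMod n)) ∣ b := by
    have h : d ∣ b.val := Nat.gcd_dvd_right m b.val
    calc (d : ZMod n) ∣ ((b.val : ℕ) : ZMod n) := Nat.cast_dvd_cast h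
      _ = b := ZMod.natCast_val _ |>.trans (ZMod.cast_id _ _)
  apply le_antisymm
  · rw [Subgroup.closure_le]
    rintro g ⟨x, rfl⟩
    obtain ⟨c1, hc1⟩ := hd1
    obtain ⟨c2, hc2⟩ := hdb
    cases x with
    | r i =>
        rw [hφr, aux_r_inv, r_mul_r]
        have : i + -(a * i) = (d : ZMod n) * (c1 * i) := by
          rw [← mul_assoc, ← hc1]; ring
        rw [this]
        exact aux_mem_zpowers _ _
    | sr i =>
        rw [hφs, aux_sr_inv, sr_mul_sr]
        have : a * i + b - i = (d : ZMod n) * (-(c1 * i) + c2) := by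
          have : (d : ZMod n) * (-(c1 * i) + c2) = -((1-a) * i) + b := by
            rw [hc1, hc2]; ring
          rw [this]; ring
        rw [this]
        exact aux_mem_zpowers _ _
  · rw [Subgroup.zpowers_le]
    -- Bezout: d = gcd(m, b.val), m = gcd(n, (1-a).val)
    have hbez1 : (m : ℤ) = n * Int.gcdA n (1 - a).val + (1 - a).val * Int.gcdB n (1 - a).val := by
      have := Int.gcd_eq_gcd_ab (n : ℤ) ((1 - a).val : ℤ)
      rwa [Int.gcd_natCast_natCast] at this
    have hbez2 : (d : ℤ) = m * Int.gcdA m b.val + b.val * Int.gcdB m b.val := by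
      have := Int.gcd_eq_gcd_ab (m : ℤ) ((b.val : ℤ))
      rwa [Int.gcd_natCast_natCast] at this
    set u := Int.gcdA m b.val
    set v := Int.gcdB m b.val
    set y := Int.gcdB n (1 - a).val
    have key : ((d : ZMod n)) = (1 - a) * ((y * u : ℤ) : ZMod n) + b * ((v : ℤ) : ZMod n) := by
      have : ((d : ℤ) : ZMod n) = (1 - a) * ((y * u : ℤ) : ZMod n) + b * ((v : ℤ) : ZMod n) := by
        rw [hbez2, hbez1]
        push_cast [ZMod.natCast_val, ZMod.cast_id, ZMod.natCast_self]
        ring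
      simpa using this
    have h1 : (r (1 - a) : DihedralGroup n) ∈
        Subgroup.closure {g : DihedralGroup n | ∃ x : DihedralGroup n, g = x * (φ x)⁻¹} := by
      apply Subgroup.subset_closure
      exact ⟨r 1, by rw [hφr, mul_one, aux_r_inv, r_mul_r]; ring_nf⟩
    have h2 : (r b : DihedralGroup n) ∈
        Subgroup.closure {g : DihedralGroup n | ∃ x : DihedralGroup n, g = x * (φ x)⁻¹} := by
      apply Subgroup.subset_closure
      exact ⟨sr 0, by rw [hφs, mul_zero, zero_add, aux_sr_inv, sr_mul_sr, sub_zero]⟩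
    have := Subgroup.mul_mem _ (Subgroup.zpow_mem _ h1 (y * u)) (Subgroup.zpow_mem _ h2 v)
    rwa [aux_r_zpow, aux_r_zpow, r_mul_r, mul_comm ((y * u : ℤ) : ZMod n),
      mul_comm ((v : ℤ) : ZMod n), ← key] at this
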